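/- (Sharpness construction, RIC bound.) Fix block length $d$, integers $s \ge 1$ and $l > 2s$, and $0 < t < 4/3$. Let $x_1 = (2sd)^{-1/2}[1,\dots,1,0,\dots,0]^T \in \mathbb{R}^N$ with ones in the first $2s$ blocks of size $d$, so $\|x_1\|_2 = 1$. Define $\Phi : \mathbb{R}^N \to \mathbb{R}^N$ by $\Phi x = (1 - t/4)^{-1/2}(x - \langle x_1, x \rangle x_1)$. Then for every $\varepsilon$ with $\varepsilon s > 1$ and every block $\lfloor ts \rfloor$-sparse $x$, $\left(1 - \tfrac{t}{4-t} - \varepsilon\right)\|x\|_2^2 < \|\Phi x\|_2^2 \le \left(1 + \tfrac{t}{4-t} + \varepsilon\right)\|x\|_2^2$; in particular $\delta_{ts|\mathcal{I}} < \frac{t}{4-t} + \varepsilon$. -/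

import Mathlib

open Finset

/-- The space of block-structured vectors in `ℝ^N`, where `N = d 0 + ⋯ + d (l-1)`:
block `i` lives in `ℝ^(d i)` and the whole space carries the `ℓ₂` norm. -/
abbrev BlockVec {l : ℕ} (d : Fin l → ℕ) :=
  PiLp 2 (fun i : Fin l => EuclideanSpace ℝ (Fin (d i)))

/-- `x` is block `s`-sparse: at most `s` nonzero blocks. -/
def BlockSparse {l : ℕ} {d : Fin l → ℕ} (s : ℕ) (x : BlockVec d) : Prop :=
  ∃ S : Finset (Fin l), S.card ≤ s ∧ ∀ i ∉ S, x i = 0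

/-- The mixed `ℓ₂/ℓ₁` norm `‖x‖_{2,ℐ} = ∑ i, ‖x[i]‖₂`. -/
noncomputable def blockL1 {l : ℕ} {d : Fin l → ℕ} (x : BlockVec d) : ℝ :=
  ∑ i, ‖x i‖

/-- `x_S`: keep the blocks indexed by `S`, zero out the rest. -/
def blockRestrict {l : ℕ} {d : Fin l → ℕ} (x : BlockVec d) (S : Finset (Fin l)) :
    BlockVec d := WithLp.toLp 2 (fun i => if i ∈ S then x i else 0)

/-- The unit vector `x₁ = (2sd)^{-1/2}(1,…,1,0,…,0)ᵀ`, with ones filling the first `2s`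
blocks (each of size `dsize`). -/
noncomputable def x1Vec {l : ℕ} (s dsize : ℕ) (d : Fin l → ℕ) : BlockVec d :=
  WithLp.toLp 2 (fun i : Fin l => WithLp.toLp 2 (fun _ : Fin (d i) =>
    if (i : ℕ) < 2 * s then (Real.sqrt (2 * s * dsize))⁻¹ else 0))

/-- The linear transformation `Φ x = (1 - t/4)^{-1/2} (x - ⟨x₁, x⟩ x₁)`. -/
noncomputable def PhiMap {l : ℕ} {d : Fin l → ℕ} (t : ℝ) (x1 : BlockVec d)
    (x : BlockVec d) : BlockVec d :=
  (Real.sqrt (1 - t / 4))⁻¹ • (x - (inner ℝ x1 x : ℝ) • x1)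

lemma aux_sum_ite {l : ℕ} (m : ℕ) (hm : m ≤ l) (c : ℝ) :
    ∑ i : Fin l, (if (i:ℕ) < m then c else 0) = m * c := by
  rw [Fin.sum_univ_eq_sum_range (fun k => if k < m then c else 0) l]
  rw [← Finset.sum_subset (Finset.range_subset_range.2 hm)
      (fun k _ hk => if_neg (by simpa using hk))]
  rw [Finset.sum_congr rfl (fun k hk => if_pos (Finset.mem_range.1 hk))]
  simp [mul_comm]

/-- Theorem 1.2, sharpness construction — RIC bound: for the operator
`Φ x = (1-t/4)^{-1/2}(x - ⟨x₁,x⟩x₁)`, every `ε` with `εs > 1` and every nonzero block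
`⌊ts⌋`-sparse `x` satisfy `(1 - t/(4-t) - ε)‖x‖² < ‖Φx‖² ≤ (1 + t/(4-t) + ε)‖x‖²`;
in particular `δ_{ts|ℐ} < t/(4-t) + ε`. -/
theorem sharpness_ric_bound {l : ℕ} (s dsize : ℕ) (d : Fin l → ℕ)
    (hd : 0 < dsize) (hs : 1 ≤ s) (hl : 2 * s < l)
    (hfirst : ∀ i : Fin l, (i : ℕ) < 2 * s → d i = dsize)
    (t : ℝ) (ht0 : 0 < t) (ht4 : t < 4 / 3) :
    ∀ ε : ℝ, 1 < ε * s →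
      ∀ x : BlockVec d, x ≠ 0 → BlockSparse ⌊t * s⌋₊ x →
        (1 - t / (4 - t) - ε) * ‖x‖ ^ 2 < ‖PhiMap t (x1Vec s dsize d) x‖ ^ 2 ∧
        ‖PhiMap t (x1Vec s dsize d) x‖ ^ 2 ≤ (1 + t / (4 - t) + ε) * ‖x‖ ^ 2 := by
  intro ε hε x hx0 hsp
  have hs0 : (0:ℝ) < s := by exact_mod_cast hs
  have hε0 : 0 < ε := by nlinarith
  have hN : (0:ℝ) < 2 * s * dsize := by positivity
  set a : ℝ := (Real.sqrt (2 * s * dsize))⁻¹ with ha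
  have ha2 : a * a = (2 * (s:ℝ) * dsize)⁻¹ := by
    rw [ha, ← mul_inv, Real.mul_self_sqrt hN.le]
  set x1 : BlockVec d := x1Vec s dsize d with hx1def
  -- norm of each block of x1
  have hblock : ∀ i : Fin l, (i:ℕ) < 2*s → ‖x1 i‖^2 = (2*(s:ℝ))⁻¹ := by
    intro i hi
    rw [EuclideanSpace.norm_eq, Real.sq_sqrt (by positivity)]
    simp only [hx1def, x1Vec, if_pos hi, Real.norm_eq_abs, sq_abs]
    rw [Finset.sum_const, Finset.card_univ, Fintype.card_fin, hfirst i hi,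
      nsmul_eq_mul, sq, ha2]
    field_simp
  -- x1 is a unit vector
  have hx1 : (inner ℝ x1 x1 : ℝ) = 1 := by
    simp only [hx1def, PiLp.inner_apply, RCLike.inner_apply, conj_trivial, x1Vec]
    have : ∀ i : Fin l, ∑ j : Fin (d i),
        (if (i:ℕ) < 2*s then a else 0) * (if (i:ℕ) < 2*s then a else 0)
        = (if (i:ℕ) < 2*s then (dsize:ℝ) * (a*a) else 0) := by
      intro i
      by_cases h : (i:ℕ) < 2*s
      · simp [h, Finset.sum_const, hfirst i h, mul_assoc]
      · simp [h]
    rw [Finset.sum_congr rfl (fun i _ => this i), aux_sum_ite (2*s) hl.le, ha2]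
    push_cast
    field_simp
  set α : ℝ := (inner ℝ x1 x : ℝ) with hα
  -- norm of Phi x squared
  have hc : (0:ℝ) < 1 - t/4 := by linarith
  have hkey : ‖PhiMap t x1 x‖^2 = (1 - t/4)⁻¹ * (‖x‖^2 - α^2) := by
    unfold PhiMap
    rw [norm_smul, mul_pow, ← hα]
    have h1 : ‖(Real.sqrt (1 - t/4))⁻¹‖^2 = (1 - t/4)⁻¹ := by
      rw [norm_inv, Real.norm_eq_abs, abs_of_nonneg (Real.sqrt_nonneg _), inv_pow,
        Real.sq_sqrt hc.le]
    rw [h1]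
    congr 1
    rw [norm_sub_sq_real x (α • x1), real_inner_smul_right, norm_smul,
      mul_pow, ← real_inner_self_eq_norm_sq x1, hx1]
    have hcomm : (inner ℝ x x1 : ℝ) = α := by rw [hα]; exact real_inner_comm x1 x
    have habs2 : ‖α‖^2 = α^2 := by rw [Real.norm_eq_abs, sq_abs]
    rw [habs2]
    linear_combination (-2*α) * hcomm
  -- bound on α²
  obtain ⟨S, hScard, hSsupp⟩ := hsp
  have hα2 : α^2 ≤ t/2 * ‖x‖^2 := by
    set T : Finset (Fin l) := S.filter (fun i => (i:ℕ) < 2*s) with hT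
    have hαT : α = ∑ i ∈ T, (inner ℝ (x1 i) (x i) : ℝ) := by
      rw [hα, PiLp.inner_apply]
      refine (Finset.sum_subset (Finset.subset_univ T) ?_).symm
      intro i _ hi
      by_cases hiS : i ∈ S
      · have : ¬ (i:ℕ) < 2*s := fun h => hi (Finset.mem_filter.2 ⟨hiS, h⟩)
        have : x1 i = 0 := by
          ext j; simp [hx1def, x1Vec, this]
        simp [this]
      · simp [hSsupp i hiS]
    have hb : ∀ i ∈ T, |(inner ℝ (x1 i) (x i) : ℝ)| ≤ Real.sqrt (2*(s:ℝ))⁻¹ * ‖x i‖ := by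
      intro i hi
      have hi2s := (Finset.mem_filter.1 hi).2
      calc |(inner ℝ (x1 i) (x i) : ℝ)| ≤ ‖x1 i‖ * ‖x i‖ := abs_real_inner_le_norm _ _
        _ = Real.sqrt (2*(s:ℝ))⁻¹ * ‖x i‖ := by
            congr 1
            rw [← Real.sqrt_sq (norm_nonneg (x1 i)), hblock i hi2s]
    have habs : |α| ≤ Real.sqrt (2*(s:ℝ))⁻¹ * ∑ i ∈ T, ‖x i‖ := by
      rw [hαT, Finset.mul_sum]
      exact (Finset.abs_sum_le_sum_abs _ _).trans (Finset.sum_le_sum hb)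
    have hsum_sq : (∑ i ∈ T, ‖x i‖)^2 ≤ T.card * ∑ i ∈ T, ‖x i‖^2 :=
      sq_sum_le_card_mul_sum_sq
    have hTx : ∑ i ∈ T, ‖x i‖^2 ≤ ‖x‖^2 := by
      rw [PiLp.norm_sq_eq_of_L2]
      exact Finset.sum_le_sum_of_subset_of_nonneg (Finset.subset_univ T)
        (fun i _ _ => sq_nonneg _)
    have hTcard : (T.card : ℝ) ≤ t * s := by
      have h1 : T.card ≤ ⌊t * s⌋₊ :=
        le_trans (Finset.card_le_card (Finset.filter_subset _ _)) hScard
      calc (T.card : ℝ) ≤ (⌊t * s⌋₊ : ℝ) := by exact_mod_cast h1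
        _ ≤ t * s := Nat.floor_le (by positivity)
    have hsum_nonneg : 0 ≤ ∑ i ∈ T, ‖x i‖^2 :=
      Finset.sum_nonneg fun i _ => sq_nonneg _
    have harith : ∀ X : ℝ, (2*(s:ℝ))⁻¹ * ((t*(s:ℝ)) * X) = t/2 * X := by
      intro X
      have hsne : (s:ℝ) ≠ 0 := ne_of_gt hs0
      field_simp
    have h2s : Real.sqrt (2*(s:ℝ))⁻¹ ^ 2 = (2*(s:ℝ))⁻¹ :=
      Real.sq_sqrt (by positivity)
    calc α^2 = |α|^2 := (sq_abs α).symm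
      _ ≤ (Real.sqrt (2*(s:ℝ))⁻¹ * ∑ i ∈ T, ‖x i‖)^2 := by
          apply pow_le_pow_left₀ (abs_nonneg α) habs
      _ = (2*(s:ℝ))⁻¹ * (∑ i ∈ T, ‖x i‖)^2 := by rw [mul_pow, h2s]
      _ ≤ (2*(s:ℝ))⁻¹ * (T.card * ∑ i ∈ T, ‖x i‖^2) := by
          apply mul_le_mul_of_nonneg_left hsum_sq (by positivity)
      _ ≤ (2*(s:ℝ))⁻¹ * ((t*s) * ‖x‖^2) := by
          apply mul_le_mul_of_nonneg_left _ (by positivity)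
          exact mul_le_mul hTcard hTx hsum_nonneg (by positivity)
      _ = t/2 * ‖x‖^2 := harith _
  have hxn : 0 < ‖x‖ := norm_pos_iff.2 hx0
  have hxpos : 0 < ‖x‖^2 := by positivity
  have hα2nn : 0 ≤ α^2 := sq_nonneg α
  have heq1 : (1 - t/4)⁻¹ = 1 + t/(4-t) := by
    have : (4:ℝ) - t ≠ 0 := by linarith
    field_simp
    ring
  constructor
  · -- lower bound
    have h1 : ‖x‖^2 - α^2 ≥ (1 - t/2) * ‖x‖^2 := by linarith [hα2]
    have h2 : ‖PhiMap t x1 x‖^2 ≥ (1 - t/4)⁻¹ * ((1 - t/2) * ‖x‖^2) := by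
      rw [hkey]
      exact mul_le_mul_of_nonneg_left h1 (by positivity)
    have h3 : (1 - t/4)⁻¹ * ((1 - t/2) * ‖x‖^2) = (1 - t/(4-t)) * ‖x‖^2 := by
      have h4 : (4:ℝ) - t ≠ 0 := by linarith
      field_simp
      ring
    nlinarith [mul_pos hε0 hxpos]
  · -- upper bound
    rw [hkey]
    have h1 : (1 - t/4)⁻¹ * (‖x‖^2 - α^2) ≤ (1 + t/(4-t)) * ‖x‖^2 := by
      rw [← heq1]
      exact mul_le_mul_of_nonneg_left (by linarith) (by positivity)
    refine h1.trans ?_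
    have h2 : (1 + t/(4-t) + ε) * ‖x‖^2 = (1 + t/(4-t)) * ‖x‖^2 + ε * ‖x‖^2 := by
      ring
    rw [h2]
    linarith [mul_pos hε0 hxpos]
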